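/- Let k be a commutative ring, ι a type, and let A = k[x_i^{(j)} : i ∈ ι, j ∈ ℕ] be the jet algebra with its Hasse–Schmidt operators ∂^{(m)}. Let P ∈ A be a polynomial lying in the subalgebra generated by the variables x_i^{(0)} (i ∈ ι). Then for every i ∈ ι and all m, s ∈ ℕ: if m ≥ s then (∂/∂x_i^{(s)})(∂^{(m)} P) = ∂^{(m−s)}((∂/∂x_i^{(0)}) P), and if m < s then (∂/∂x_i^{(s)})(∂^{(m)} P) = 0. -/

import Mathlib

open MvPolynomial

/-- The universal Hasse–Schmidt derivation on the jet algebra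
`A = k[xᵢ⁽ʲ⁾ : i ∈ ι, j ∈ ℕ]`, packaged as the `k`-algebra homomorphism `A → A[[u]]`
determined on generators by `xᵢ⁽ʲ⁾ ↦ Σₐ binom(j+a, a)·xᵢ⁽ʲ⁺ᵃ⁾·uᵃ`. -/
noncomputable def jetHom (k ι : Type*) [CommRing k] :
    MvPolynomial (ι × ℕ) k →ₐ[k] PowerSeries (MvPolynomial (ι × ℕ) k) :=
  MvPolynomial.aeval fun v : ι × ℕ =>
    PowerSeries.mk fun a : ℕ =>
      (((v.2 + a).choose a : MvPolynomial (ι × ℕ) k) * X (v.1, v.2 + a))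

/-- The operator `∂⁽ᵐ⁾` on the jet algebra: the coefficient of `uᵐ` of `jetHom`. -/
noncomputable def jetDeriv {k ι : Type*} [CommRing k] (m : ℕ)
    (P : MvPolynomial (ι × ℕ) k) : MvPolynomial (ι × ℕ) k :=
  PowerSeries.coeff (R := MvPolynomial (ι × ℕ) k) m (jetHom k ι P)

lemma jetDeriv_mul {k ι : Type*} [CommRing k] (m : ℕ) (P Q : MvPolynomial (ι × ℕ) k) :
    jetDeriv m (P * Q) =
      ∑ a ∈ Finset.range (m + 1), jetDeriv a P * jetDeriv (m - a) Q := by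
  simp only [jetDeriv, map_mul, PowerSeries.coeff_mul]
  rw [Finset.Nat.sum_antidiagonal_eq_sum_range_succ_mk]

lemma jetDeriv_add {k ι : Type*} [CommRing k] (m : ℕ) (P Q : MvPolynomial (ι × ℕ) k) :
    jetDeriv m (P + Q) = jetDeriv m P + jetDeriv m Q := by
  simp [jetDeriv, map_add]

lemma jetDeriv_X0 {k ι : Type*} [CommRing k] (j : ι) (m : ℕ) :
    jetDeriv m (X (j, 0) : MvPolynomial (ι × ℕ) k) = X (j, m) := by
  simp [jetDeriv, jetHom, PowerSeries.coeff_mk]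

lemma jetDeriv_algebraMap {k ι : Type*} [CommRing k] (m : ℕ) (c : k) :
    jetDeriv m (algebraMap k (MvPolynomial (ι × ℕ) k) c) =
      if m = 0 then algebraMap k (MvPolynomial (ι × ℕ) k) c else 0 := by
  simp only [jetDeriv, AlgHom.commutes, PowerSeries.algebraMap_apply]
  by_cases h : m = 0 <;> simp [h, PowerSeries.coeff_C]

/-- If `P` lies in the subalgebra of the jet algebra generated by the variables `xᵢ⁽⁰⁾`,
then `(∂/∂xᵢ⁽ˢ⁾)(∂⁽ᵐ⁾P) = ∂⁽ᵐ⁻ˢ⁾((∂/∂xᵢ⁽⁰⁾)P)` for `m ≥ s`, and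
`(∂/∂xᵢ⁽ˢ⁾)(∂⁽ᵐ⁾P) = 0` for `m < s`. -/
theorem pderiv_jetDeriv {k ι : Type*} [CommRing k] (P : MvPolynomial (ι × ℕ) k)
    (hP : P ∈ Algebra.adjoin k (Set.range fun i : ι => (X (i, 0) : MvPolynomial (ι × ℕ) k)))
    (i : ι) (m s : ℕ) :
    (s ≤ m → pderiv (i, s) (jetDeriv m P) = jetDeriv (m - s) (pderiv (i, 0) P)) ∧
    (m < s → pderiv (i, s) (jetDeriv m P) = 0) := by
  classical
  revert m s
  induction hP using Algebra.adjoin_induction with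
  | mem x hx =>
    obtain ⟨j, rfl⟩ := hx
    intro m s
    constructor
    · intro hsm
      rw [jetDeriv_X0, pderiv_X, pderiv_X]
      by_cases hji : j = i
      · subst hji
        by_cases hms : m = s
        · subst hms
          simp [jetDeriv, Nat.sub_self]
        · have h1 : ((j, m) : ι × ℕ) ≠ (j, s) := by simp [hms]
          have h2 : m - s ≠ 0 := by omega
          rw [Pi.single_apply, if_neg h1, Pi.single_apply, if_pos rfl]
          simp [jetDeriv, h2]
      · have h1 : ((j, m) : ι × ℕ) ≠ (i, s) := by simp [hji]
        have h2 : ((j, 0) : ι × ℕ) ≠ (i, 0) := by simp [hji]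
        rw [Pi.single_apply, if_neg h1, Pi.single_apply, if_neg h2]
        simp [jetDeriv]
    · intro hms
      rw [jetDeriv_X0, pderiv_X, Pi.single_apply, if_neg]
      intro h
      rw [Prod.ext_iff] at h
      omega
  | algebraMap r =>
    intro m s
    rw [jetDeriv_algebraMap]
    constructor
    · intro _
      have : pderiv (i, 0) (algebraMap k (MvPolynomial (ι × ℕ) k) r) = 0 := by
        simp [MvPolynomial.algebraMap_eq, pderiv_C]
      rw [this]
      by_cases h : m = 0 <;>
        simp [h, MvPolynomial.algebraMap_eq, pderiv_C, jetDeriv, map_zero]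
    · intro _
      by_cases h : m = 0 <;> simp [h, MvPolynomial.algebraMap_eq, pderiv_C]
  | add x y hx hy ihx ihy =>
    intro m s
    constructor
    · intro hsm
      rw [jetDeriv_add, map_add, (ihx m s).1 hsm, (ihy m s).1 hsm, map_add, jetDeriv_add]
    · intro hms
      rw [jetDeriv_add, map_add, (ihx m s).2 hms, (ihy m s).2 hms, add_zero]
  | mul x y hx hy ihx ihy =>
    intro m s
    have key : pderiv (i, s) (jetDeriv m (x * y)) =
        ∑ a ∈ Finset.range (m + 1),
          (jetDeriv a x * pderiv (i, s) (jetDeriv (m - a) y) +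
            jetDeriv (m - a) y * pderiv (i, s) (jetDeriv a x)) := by
      rw [jetDeriv_mul, map_sum]
      refine Finset.sum_congr rfl fun a _ => ?_
      rw [Derivation.leibniz]
      simp [smul_eq_mul]
    constructor
    · intro hsm
      -- RHS
      have hrhs : jetDeriv (m - s) (pderiv (i, 0) (x * y)) =
          ∑ a ∈ Finset.range (m - s + 1),
            jetDeriv a x * jetDeriv (m - s - a) (pderiv (i, 0) y) +
          ∑ a ∈ Finset.range (m - s + 1),
            jetDeriv a y * jetDeriv (m - s - a) (pderiv (i, 0) x) := by
        rw [Derivation.leibniz]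
        simp only [smul_eq_mul]
        rw [jetDeriv_add, jetDeriv_mul, jetDeriv_mul]
      rw [key, hrhs, Finset.sum_add_distrib]
      congr 1
      · -- terms xₐ * ∂(D_{m-a} y): nonzero only when a ≤ m - s
        rw [← Finset.sum_subset (Finset.range_subset_range.2 (by omega) :
            Finset.range (m - s + 1) ⊆ Finset.range (m + 1))]
        · refine Finset.sum_congr rfl fun a ha => ?_
          rw [Finset.mem_range] at ha
          have h1 : s ≤ m - a := by omega
          rw [(ihy (m - a) s).1 h1]
          congr 2
          omega
        · intro a ha hna
          rw [Finset.mem_range] at ha hna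
          have : m - a < s := by omega
          rw [(ihy (m - a) s).2 this, mul_zero]
      · -- terms D_{m-a} y * ∂(D_a x): nonzero only when a ≥ s; shift index
        have step1 : ∑ a ∈ Finset.range (m + 1),
            jetDeriv (m - a) y * pderiv (i, s) (jetDeriv a x) =
            ∑ a ∈ Finset.Ico s (m + 1),
            jetDeriv (m - a) y * pderiv (i, s) (jetDeriv a x) := by
          rw [Finset.range_eq_Ico,
            ← Finset.sum_Ico_consecutive _ (Nat.zero_le s) (by omega : s ≤ m + 1)]
          have : ∑ a ∈ Finset.Ico 0 s,
              jetDeriv (m - a) y * pderiv (i, s) (jetDeriv a x) = 0 := by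
            refine Finset.sum_eq_zero fun a ha => ?_
            rw [Finset.mem_Ico] at ha
            rw [(ihx a s).2 ha.2, mul_zero]
          rw [this, zero_add]
        rw [step1, Finset.sum_Ico_eq_sum_range]
        have hrange : m + 1 - s = m - s + 1 := by omega
        rw [hrange, ← Finset.sum_range_reflect
          (fun a => jetDeriv a y * jetDeriv (m - s - a) (pderiv (i, 0) x)) (m - s + 1)]
        refine Finset.sum_congr rfl fun a ha => ?_
        rw [Finset.mem_range] at ha
        rw [(ihx (s + a) s).1 (by omega)]
        have e1 : m - (s + a) = m - s + 1 - 1 - a := by omega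
        have e2 : s + a - s = m - s - (m - s + 1 - 1 - a) := by omega
        rw [e1, e2]
    · intro hms
      rw [key]
      refine Finset.sum_eq_zero fun a ha => ?_
      rw [Finset.mem_range] at ha
      rw [(ihx a s).2 (by omega), (ihy (m - a) s).2 (by omega), mul_zero, mul_zero, add_zero]
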